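/- Consolidated root bound of the stability proof: Let a, b ∈ ℝ with 0 < a ≤ 1 and 0 < b ≤ 1, and let g ∈ ℝ satisfy g ≤ ½·(a² + b²) and 1 + (a·b)² + 2g ≥ 0. Then every complex root z of the quadratic z² − 2gz + (ab)² = 0 satisfies |z| ≤ 1. -/

import Mathlib

/-- Consolidated root bound of the stability proof: with `0 < a ≤ 1`,
`0 < b ≤ 1`, `g ≤ ½(a² + b²)` and `1 + (ab)² + 2g ≥ 0`, every complex root of
`z² - 2gz + (ab)² = 0` has modulus at most `1`. -/
theorem stability_root_bound (a b g : ℝ)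
    (ha : 0 < a) (ha1 : a ≤ 1) (hb : 0 < b) (hb1 : b ≤ 1)
    (hg1 : g ≤ (a ^ 2 + b ^ 2) / 2) (hg2 : 1 + (a * b) ^ 2 + 2 * g ≥ 0) :
    ∀ z : ℂ, z ^ 2 - 2 * (g : ℂ) * z + ((a : ℂ) * b) ^ 2 = 0 →
      ‖z‖ ≤ 1 := by
  intro z hz
  obtain ⟨x, y⟩ := z
  have h1 : x ^ 2 - y ^ 2 - 2 * g * x + (a * b) ^ 2 = 0 := by
    have := congrArg Complex.re hz
    simp [pow_two, Complex.mul_re, Complex.mul_im] at this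
    linarith [this]
  have h2 : 2 * x * y - 2 * g * y = 0 := by
    have := congrArg Complex.im hz
    simp [pow_two, Complex.mul_re, Complex.mul_im] at this
    nlinarith [this]
  have hab : a * b ≤ 1 := mul_le_one₀ ha1 hb.le hb1
  have hc1 : (a * b) ^ 2 ≤ 1 := by nlinarith [mul_pos ha hb]
  have hc0 : 0 < (a * b) ^ 2 := by positivity
  have hp1 : 1 - 2 * g + (a * b) ^ 2 ≥ 0 := by
    nlinarith [mul_nonneg (by nlinarith : (0:ℝ) ≤ 1 - a ^ 2)
      (by nlinarith : (0:ℝ) ≤ 1 - b ^ 2)]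
  have hsq : x ^ 2 + y ^ 2 ≤ 1 := by
    by_cases hy0 : y = 0
    · subst hy0
      simp only [ne_eq, OfNat.ofNat_ne_zero, not_false_eq_true, zero_pow, sub_zero] at h1 ⊢
      have hx1 : x ≤ 1 := by
        by_contra h
        push_neg at h
        nlinarith [mul_nonneg hp1 (by linarith : (0:ℝ) ≤ x),
          mul_pos (by linarith : (0:ℝ) < x - 1)
            (by linarith : (0:ℝ) < x - (a * b) ^ 2)]
      have hx2 : -1 ≤ x := by
        by_contra h
        push_neg at h
        nlinarith [mul_nonneg hg2 (by linarith : (0:ℝ) ≤ -x),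
          mul_pos (by linarith : (0:ℝ) < -x - 1)
            (by linarith : (0:ℝ) < -x - (a * b) ^ 2)]
      nlinarith
    · have hxg : x = g := by
        have h3 : 2 * y * (x - g) = 0 := by linarith [h2]
        rcases mul_eq_zero.mp h3 with h | h
        · exact absurd (by linarith : y = 0) hy0
        · linarith
      subst hxg
      nlinarith
  have habs : ‖(⟨x, y⟩ : ℂ)‖ ^ 2 = x ^ 2 + y ^ 2 := by
    rw [Complex.sq_norm, Complex.normSq_apply]; simp; ring
  nlinarith [norm_nonneg (⟨x, y⟩ : ℂ)]
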